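/- Let p > 1 and define h(t) = (1 - t^{1-p})/(1 - t) for t ∈ (0,1). Then h is increasing on (0,1) and h(t) ≤ -(p-1) for all t ∈ (0,1). Moreover, for t ∈ (0, 1/2], h(t) ≤ -((p-1)/2^p)·t^{1-p}/(1-t). -/

import Mathlib

open Real

lemma aux_strictConvexOn_rpow_neg (p : ℝ) (hp : 1 < p) :
    StrictConvexOn ℝ (Set.Ioi (0:ℝ)) (fun x : ℝ => x ^ (1 - p)) := by
  apply strictConvexOn_of_deriv2_pos' (convex_Ioi 0)
  · intro x hx
    exact (Real.continuousAt_rpow_const x _ (Or.inl (ne_of_gt hx))).continuousWithinAt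
  intro x hx
  rw [Set.mem_Ioi] at hx
  have h1 : deriv (fun y : ℝ => y ^ (1 - p)) =ᶠ[nhds x]
      fun y : ℝ => (1 - p) * y ^ (-p) := by
    filter_upwards [eventually_ne_nhds (ne_of_gt hx)] with y hy
    rw [Real.deriv_rpow_const y (1 - p)]
    ring_nf
  have h2 : deriv^[2] (fun y : ℝ => y ^ (1 - p)) x
      = (1 - p) * (-p * x ^ (-p - 1)) := by
    show deriv (deriv (fun y : ℝ => y ^ (1 - p))) x = _
    rw [h1.deriv_eq, deriv_const_mul _ (Real.differentiableAt_rpow_const_of_ne _ (ne_of_gt hx)),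
      Real.deriv_rpow_const x (-p)]
  rw [h2]
  have hxp : (0:ℝ) < x ^ (-p - 1) := Real.rpow_pos_of_pos hx _
  have : (1 - p) * (-p * x ^ (-p - 1)) = (p - 1) * p * x ^ (-p - 1) := by ring
  rw [this]
  have hp0 : (0:ℝ) < p := lt_trans one_pos hp
  have hp1 : (0:ℝ) < p - 1 := by linarith
  positivity

/-- Key algebraic inequality: `t^(p-1) * (p - (p-1)*t) ≤ 1` for `0 ≤ t`, via weighted AM-GM. -/
lemma aux_amgm (p : ℝ) (hp : 1 < p) (t : ℝ) (ht0 : 0 < t) (ht1 : t < 1) :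
    p - (p - 1) * t ≤ t ^ (1 - p) := by
  have hp0 : (0:ℝ) < p := lt_trans one_pos hp
  have hA : 0 < p - (p - 1) * t := by nlinarith
  have amgm := Real.geom_mean_le_arith_mean2_weighted
    (w₁ := (p - 1) / p) (w₂ := 1 / p) (p₁ := t) (p₂ := p - (p - 1) * t)
    (div_nonneg (by linarith) hp0.le) (by positivity) ht0.le hA.le (by field_simp; ring)
  have hsum : (p - 1) / p * t + 1 / p * (p - (p - 1) * t) = 1 := by field_simp; ring
  rw [hsum] at amgm
  have hbase : 0 ≤ t ^ ((p - 1) / p) * (p - (p - 1) * t) ^ (1 / p) := by positivity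
  have hpow := Real.rpow_le_one hbase amgm hp0.le
  rw [Real.mul_rpow (by positivity) (by positivity)] at hpow
  rw [← Real.rpow_mul ht0.le, ← Real.rpow_mul hA.le] at hpow
  rw [div_mul_cancel₀ _ (ne_of_gt hp0), one_div, inv_mul_cancel₀ (ne_of_gt hp0),
    Real.rpow_one] at hpow
  -- hpow : t ^ (p - 1) * (p - (p - 1) * t) ≤ 1
  have htp : (0:ℝ) < t ^ (p - 1) := Real.rpow_pos_of_pos ht0 _
  have h1 : p - (p - 1) * t ≤ 1 / t ^ (p - 1) :=
    (le_div_iff₀ htp).mpr (by linarith [hpow])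
  rwa [one_div, ← Real.rpow_neg ht0.le, neg_sub] at h1

theorem log_estimate_auxiliary_function (p : ℝ) (hp : 1 < p) (h : ℝ → ℝ)
    (hh : ∀ t ∈ Set.Ioo (0:ℝ) 1, h t = (1 - t ^ (1 - p)) / (1 - t)) :
    StrictMonoOn h (Set.Ioo 0 1) ∧
      (∀ t ∈ Set.Ioo (0:ℝ) 1, h t ≤ -(p - 1)) ∧
      (∀ t ∈ Set.Ioc (0:ℝ) (1/2), h t ≤ -((p - 1) / 2 ^ p) * t ^ (1 - p) / (1 - t)) := by
  refine ⟨?_, ?_, ?_⟩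
  · -- strict monotonicity via strict convexity of x ↦ x^(1-p)
    intro s hs t ht hst
    rw [hh s hs, hh t ht]
    have key := (aux_strictConvexOn_rpow_neg p hp).secant_strict_mono
      (a := 1) (x := s) (y := t) (Set.mem_Ioi.mpr one_pos)
      (Set.mem_Ioi.mpr hs.1) (Set.mem_Ioi.mpr ht.1) (ne_of_lt hs.2) (ne_of_lt ht.2) hst
    simp only [Real.one_rpow] at key
    have e1 : (s ^ (1 - p) - 1) / (s - 1) = (1 - s ^ (1 - p)) / (1 - s) := by
      rw [← neg_div_neg_eq]; ring_nf
    have e2 : (t ^ (1 - p) - 1) / (t - 1) = (1 - t ^ (1 - p)) / (1 - t) := by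
      rw [← neg_div_neg_eq]; ring_nf
    rw [e1, e2] at key
    exact key
  · -- h t ≤ -(p-1)
    intro t ht
    obtain ⟨ht0, ht1⟩ := ht
    rw [hh t ⟨ht0, ht1⟩]
    have h1t : 0 < 1 - t := by linarith
    rw [div_le_iff₀ h1t]
    have := aux_amgm p hp t ht0 ht1
    nlinarith
  · -- h t ≤ -((p-1)/2^p) * t^(1-p) / (1-t) for t ∈ (0, 1/2]
    intro t ht
    obtain ⟨ht0, ht2⟩ := ht
    have ht1 : t < 1 := lt_of_le_of_lt ht2 (by norm_num)
    rw [hh t ⟨ht0, ht1⟩]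
    have h1t : 0 < 1 - t := by linarith
    rw [show -((p - 1) / 2 ^ p) * t ^ (1 - p) / (1 - t)
      = (-((p - 1) / 2 ^ p) * t ^ (1 - p)) / (1 - t) from rfl,
      div_le_div_iff_of_pos_right h1t]
    -- goal: 1 - t^(1-p) ≤ -((p-1)/2^p) * t^(1-p)
    have h2p : (0:ℝ) < (2:ℝ) ^ p := Real.rpow_pos_of_pos two_pos p
    have hbern : 1 + p ≤ (2:ℝ) ^ p := by
      have := one_add_mul_self_le_rpow_one_add (s := 1) (by norm_num) hp.le
      norm_num at this
      linarith
    -- t^(1-p) ≥ 2^(p-1)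
    have hmono : (2:ℝ)⁻¹ ^ (1 - p) ≤ t ^ (1 - p) := by
      apply Real.rpow_le_rpow_of_nonpos ht0 (by linarith [ht2]) (by linarith)
    have h2inv : (2:ℝ)⁻¹ ^ (1 - p) = (2:ℝ) ^ p / 2 := by
      rw [Real.inv_rpow (by norm_num : (0:ℝ) ≤ 2), ← Real.rpow_neg (by norm_num : (0:ℝ) ≤ 2),
        neg_sub, Real.rpow_sub two_pos, Real.rpow_one]
    rw [h2inv] at hmono
    have htp : (0:ℝ) < t ^ (1 - p) := Real.rpow_pos_of_pos ht0 _
    -- need: 1 ≤ (1 - (p-1)/2^p) * t^(1-p)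
    have hc : (p - 1) / 2 ^ p < 1 := by
      rw [div_lt_one h2p]; linarith
    have key : 1 ≤ (1 - (p - 1) / 2 ^ p) * t ^ (1 - p) := by
      have h1 : (1 - (p - 1) / 2 ^ p) * ((2:ℝ) ^ p / 2) ≥ 1 := by
        have : (1 - (p - 1) / 2 ^ p) * ((2:ℝ) ^ p / 2) = (2 ^ p - (p - 1)) / 2 := by
          field_simp
        rw [this]
        linarith
      calc (1:ℝ) ≤ (1 - (p - 1) / 2 ^ p) * ((2:ℝ) ^ p / 2) := h1
        _ ≤ (1 - (p - 1) / 2 ^ p) * t ^ (1 - p) := by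
            apply mul_le_mul_of_nonneg_left hmono (by linarith)
    nlinarith [key]
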